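/- Under the correlated Erdős–Rényi planted alignment model with parameters (n,q,s) and s > q, for any symmetric 0/1 matrices a, b (zero diagonal) realized with positive probability, a permutation π maximizes the posterior probability P(π* = π | A = a, B = b) over all permutations of [n] if and only if π maximizes ⟨a, ΠbΠᵀ⟩ = Σ_{u,v} a_{u,v} b_{π(u),π(v)}, i.e. the maximum-a-posteriori estimator of π* is exactly the solution of the quadratic assignment problem argmax_Π ⟨A, ΠBΠᵀ⟩. (This uses that r := s(1−q(2−s)) / (q(1−s)²) > 1 whenever s > q.) -/

import Mathlib

/-- Probability of a single pair of correlated Bernoulli edge indicators in the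
correlated Erdős–Rényi model `G(n,q,s)`. -/
def pairProb (q s : ℝ) : Bool → Bool → ℝ
  | true, true => q * s
  | true, false => q * (1 - s)
  | false, true => q * (1 - s)
  | false, false => 1 - q * (2 - s)

/-- Joint probability `P(π* = π, A = a, B = b)` under the correlated Erdős–Rényi
planted alignment model: the pairs `(A_{uv}, A'_{uv})`, `u < v`, are i.i.d. with
distribution `pairProb q s`, `π*` is a uniform permutation independent of
everything, and `B_{π*(u),π*(v)} = A'_{u,v}`. -/
noncomputable def corrERJoint (n : ℕ) (q s : ℝ) (π : Equiv.Perm (Fin n))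
    (a b : Fin n → Fin n → Bool) : ℝ :=
  (Nat.factorial n : ℝ)⁻¹ *
    ∏ e ∈ Finset.univ.filter (fun e : Fin n × Fin n => e.1 < e.2),
      pairProb q s (a e.1 e.2) (b (π e.1) (π e.2))

/-- Posterior probability `P(π* = π | A = a, B = b)`. -/
noncomputable def corrERPosterior (n : ℕ) (q s : ℝ) (π : Equiv.Perm (Fin n))
    (a b : Fin n → Fin n → Bool) : ℝ :=
  corrERJoint n q s π a b / ∑ π' : Equiv.Perm (Fin n), corrERJoint n q s π' a b

/-- The QAP objective `⟨a, Π b Πᵀ⟩ = Σ_{u,v} a_{u,v} b_{π(u),π(v)}`. -/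
def qapScore (n : ℕ) (π : Equiv.Perm (Fin n)) (a b : Fin n → Fin n → Bool) : ℝ :=
  ∑ u : Fin n, ∑ v : Fin n,
    (if a u v = true then (1 : ℝ) else 0) * (if b (π u) (π v) = true then (1 : ℝ) else 0)

/-- Generic: sum over all ordered pairs equals twice the sum over `u < v` plus diagonal. -/
lemma sum_pairs' {M : Type*} [AddCommMonoid M] (n : ℕ) (c : Fin n → Fin n → M)
    (hsymm : ∀ u v, c u v = c v u) :
    ∑ u : Fin n, ∑ v : Fin n, c u v
      = 2 • ∑ e ∈ Finset.univ.filter (fun e : Fin n × Fin n => e.1 < e.2), c e.1 e.2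
        + ∑ u : Fin n, c u u := by
  have h1 : ∑ u : Fin n, ∑ v : Fin n, c u v = ∑ e : Fin n × Fin n, c e.1 e.2 :=
    (Fintype.sum_prod_type (fun e : Fin n × Fin n => c e.1 e.2)).symm
  rw [h1, ← Finset.sum_filter_add_sum_filter_not Finset.univ (fun e : Fin n × Fin n => e.1 < e.2)]
  have h2 : ∑ e ∈ Finset.univ.filter (fun e : Fin n × Fin n => ¬ e.1 < e.2), c e.1 e.2
      = ∑ e ∈ Finset.univ.filter (fun e : Fin n × Fin n => e.1 < e.2), c e.1 e.2
        + ∑ u : Fin n, c u u := by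
    rw [← Finset.sum_filter_add_sum_filter_not
      (Finset.univ.filter (fun e : Fin n × Fin n => ¬ e.1 < e.2))
      (fun e : Fin n × Fin n => e.2 < e.1)]
    have hd : ∑ e ∈ (Finset.univ.filter (fun e : Fin n × Fin n => ¬ e.1 < e.2)).filter
        (fun e : Fin n × Fin n => ¬ e.2 < e.1), c e.1 e.2 = ∑ u : Fin n, c u u := by
      refine Finset.sum_nbij' (i := fun e => e.1) (j := fun u => (u, u)) ?_ ?_ ?_ ?_ ?_
      · intro e he; exact Finset.mem_univ _
      · intro u _; simp
      · intro e he
        simp only [Finset.mem_filter, Finset.mem_univ, true_and] at he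
        have h : e.1 = e.2 := le_antisymm (not_lt.1 he.2) (not_lt.1 he.1)
        exact Prod.ext_iff.mpr ⟨rfl, h⟩
      · intro u _; rfl
      · intro e he
        simp only [Finset.mem_filter, Finset.mem_univ, true_and] at he
        have h : e.1 = e.2 := le_antisymm (not_lt.1 he.2) (not_lt.1 he.1)
        rw [← h]
    have hs : ∑ e ∈ (Finset.univ.filter (fun e : Fin n × Fin n => ¬ e.1 < e.2)).filter
        (fun e : Fin n × Fin n => e.2 < e.1), c e.1 e.2
        = ∑ e ∈ Finset.univ.filter (fun e : Fin n × Fin n => e.1 < e.2), c e.1 e.2 := by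
      refine Finset.sum_nbij' (i := fun e => Prod.swap e) (j := fun e => Prod.swap e)
        ?_ ?_ ?_ ?_ ?_
      · intro e he; simp only [Finset.mem_filter, Finset.mem_univ, true_and] at he ⊢
        exact he.2
      · intro e he; simp only [Finset.mem_filter, Finset.mem_univ, true_and] at he ⊢
        exact ⟨not_lt.2 he.le, he⟩
      · intro e _; simp
      · intro e _; simp
      · intro e _; exact hsymm e.1 e.2
    rw [hd, hs]
  rw [h2, two_smul]
  abel

/-- Counting sums over `u < v` are invariant under relabeling by a permutation,
for symmetric `b` with zero diagonal. -/
lemma count_perm (n : ℕ) (π : Equiv.Perm (Fin n)) (g : Bool → ℕ)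
    (b : Fin n → Fin n → Bool) (hb_symm : ∀ u v, b u v = b v u)
    (hb_diag : ∀ u, b u u = false) :
    ∑ e ∈ Finset.univ.filter (fun e : Fin n × Fin n => e.1 < e.2),
        g (b (π e.1) (π e.2))
      = ∑ e ∈ Finset.univ.filter (fun e : Fin n × Fin n => e.1 < e.2), g (b e.1 e.2) := by
  have h1 := sum_pairs' n (fun u v => g (b (π u) (π v)))
    (fun u v => show g (b (π u) (π v)) = g (b (π v) (π u)) by rw [hb_symm])
  have h2 := sum_pairs' n (fun u v => g (b u v))
    (fun u v => show g (b u v) = g (b v u) by rw [hb_symm])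
  beta_reduce at h1 h2
  rw [two_smul] at h1 h2
  have h3 : ∑ u : Fin n, ∑ v : Fin n, g (b (π u) (π v))
      = ∑ u : Fin n, ∑ v : Fin n, g (b u v) := by
    rw [← Equiv.sum_comp π (fun u => ∑ v : Fin n, g (b u v))]
    exact Finset.sum_congr rfl (fun u _ =>
      Equiv.sum_comp π (fun v => g (b (π u) v)))
  have h4 : ∑ u : Fin n, g (b (π u) (π u)) = ∑ u : Fin n, g (b u u) := by
    simp [hb_diag]
  rw [h1, h4] at h3
  rw [h2] at h3
  omega

lemma pairProb_eq (q s : ℝ) (x y : Bool) :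
    pairProb q s x y
      = (q * s) ^ (if x && y then 1 else 0)
        * (q * (1 - s)) ^ (if x != y then 1 else 0)
        * (1 - q * (2 - s)) ^ (if !x && !y then 1 else 0) := by
  cases x <;> cases y <;> simp [pairProb]

/-- Under the correlated Erdős–Rényi planted alignment model with `s > q`, for any
observed `(a,b)` of positive probability, a permutation maximizes the posterior
`P(π* = · | A = a, B = b)` iff it maximizes the QAP objective `⟨a, Π b Πᵀ⟩`:
the MAP estimator of `π*` is exactly the solution of the quadratic assignment
problem. -/
theorem stmt_14 (n : ℕ) (q s : ℝ) (hq0 : 0 < q) (hq1 : q < 1)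
    (hqs : q < s) (hs1 : s ≤ 1)
    (hq1s : 0 < q * (1 - s)) (h00 : 0 < 1 - q * (2 - s))
    (a b : Fin n → Fin n → Bool)
    (ha_symm : ∀ u v, a u v = a v u) (ha_diag : ∀ u, a u u = false)
    (hb_symm : ∀ u v, b u v = b v u) (hb_diag : ∀ u, b u u = false)
    (hpos : 0 < ∑ π' : Equiv.Perm (Fin n), corrERJoint n q s π' a b) :
    ∀ π : Equiv.Perm (Fin n),
      (∀ π' : Equiv.Perm (Fin n),
          corrERPosterior n q s π' a b ≤ corrERPosterior n q s π a b)
      ↔ (∀ π' : Equiv.Perm (Fin n), qapScore n π' a b ≤ qapScore n π a b) := by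
  classical
  set E := Finset.univ.filter (fun e : Fin n × Fin n => e.1 < e.2) with hE
  set T := q * s with hTdef
  set P := q * (1 - s) with hPdef
  set Q := 1 - q * (2 - s) with hQdef
  have hT0 : 0 < T := mul_pos hq0 (lt_trans hq0 hqs)
  have hP0 : 0 < P := hq1s
  have hQ0 : 0 < Q := h00
  -- counting functions
  set kk : Equiv.Perm (Fin n) → ℕ := fun π =>
    ∑ e ∈ E, (if a e.1 e.2 && b (π e.1) (π e.2) then 1 else 0) with hkk
  set mm : Equiv.Perm (Fin n) → ℕ := fun π =>
    ∑ e ∈ E, (if a e.1 e.2 != b (π e.1) (π e.2) then 1 else 0) with hmm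
  set zz : Equiv.Perm (Fin n) → ℕ := fun π =>
    ∑ e ∈ E, (if !a e.1 e.2 && !b (π e.1) (π e.2) then 1 else 0) with hzz
  set Na : ℕ := ∑ e ∈ E, (if a e.1 e.2 then 1 else 0) with hNa
  set Nb : ℕ := ∑ e ∈ E, (if b e.1 e.2 then 1 else 0) with hNb
  set N : ℕ := ∑ _e ∈ E, 1 with hN
  -- product formula
  have hprod : ∀ π : Equiv.Perm (Fin n),
      ∏ e ∈ E, pairProb q s (a e.1 e.2) (b (π e.1) (π e.2))
        = T ^ kk π * P ^ mm π * Q ^ zz π := by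
    intro π
    calc ∏ e ∈ E, pairProb q s (a e.1 e.2) (b (π e.1) (π e.2))
        = ∏ e ∈ E, (T ^ (if a e.1 e.2 && b (π e.1) (π e.2) then 1 else 0)
            * P ^ (if a e.1 e.2 != b (π e.1) (π e.2) then 1 else 0)
            * Q ^ (if !a e.1 e.2 && !b (π e.1) (π e.2) then 1 else 0)) :=
          Finset.prod_congr rfl (fun e _ => pairProb_eq q s _ _)
      _ = T ^ kk π * P ^ mm π * Q ^ zz π := by
          rw [Finset.prod_mul_distrib, Finset.prod_mul_distrib,
            Finset.prod_pow_eq_pow_sum, Finset.prod_pow_eq_pow_sum,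
            Finset.prod_pow_eq_pow_sum]
  -- invariance of Nb under π
  have hNbπ : ∀ π : Equiv.Perm (Fin n),
      ∑ e ∈ E, (if b (π e.1) (π e.2) then 1 else 0) = Nb :=
    fun π => count_perm n π (fun y => if y then 1 else 0) b hb_symm hb_diag
  -- exponent relations
  have hm : ∀ π : Equiv.Perm (Fin n), mm π + 2 * kk π = Na + Nb := by
    intro π
    have h1 : mm π + 2 * kk π
        = ∑ e ∈ E, ((if a e.1 e.2 != b (π e.1) (π e.2) then 1 else 0)
            + 2 * (if a e.1 e.2 && b (π e.1) (π e.2) then 1 else 0)) := by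
      rw [hmm, hkk, Finset.mul_sum, ← Finset.sum_add_distrib]
    have h2 : ∀ e ∈ E, ((if a e.1 e.2 != b (π e.1) (π e.2) then 1 else 0)
            + 2 * (if a e.1 e.2 && b (π e.1) (π e.2) then 1 else 0) : ℕ)
        = (if a e.1 e.2 then 1 else 0) + (if b (π e.1) (π e.2) then 1 else 0) := by
      intro e _
      cases a e.1 e.2 <;> cases b (π e.1) (π e.2) <;> simp
    rw [h1, Finset.sum_congr rfl h2, Finset.sum_add_distrib, hNbπ π]
  have hz : ∀ π : Equiv.Perm (Fin n), zz π + (Na + Nb) = N + kk π := by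
    intro π
    have h1 : zz π + (Na + Nb)
        = ∑ e ∈ E, ((if !a e.1 e.2 && !b (π e.1) (π e.2) then 1 else 0)
            + ((if a e.1 e.2 then 1 else 0) + (if b (π e.1) (π e.2) then 1 else 0))) := by
      rw [hzz, hNa, ← hNbπ π, ← Finset.sum_add_distrib, ← Finset.sum_add_distrib]
    have h2 : ∀ e ∈ E, ((if !a e.1 e.2 && !b (π e.1) (π e.2) then 1 else 0)
            + ((if a e.1 e.2 then 1 else 0) + (if b (π e.1) (π e.2) then 1 else 0)) : ℕ)
        = 1 + (if a e.1 e.2 && b (π e.1) (π e.2) then 1 else 0) := by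
      intro e _
      cases a e.1 e.2 <;> cases b (π e.1) (π e.2) <;> simp
    rw [h1, Finset.sum_congr rfl h2, Finset.sum_add_distrib]
  -- ratio r
  set r : ℝ := T * Q / P ^ 2 with hr
  have hr1 : 1 < r := by
    rw [hr, lt_div_iff₀ (by positivity)]
    have : T * Q - P ^ 2 = q * (s - q) := by rw [hTdef, hPdef, hQdef]; ring
    nlinarith [mul_pos hq0 (sub_pos.2 hqs)]
  clear hTdef hPdef hQdef hq1s h00
  clear_value T P Q
  set D : ℝ := P ^ (Na + Nb) * Q ^ N / Q ^ (Na + Nb) with hD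
  have hD0 : 0 < D := by
    rw [hD]
    exact div_pos (mul_pos (pow_pos hP0 _) (pow_pos hQ0 _)) (pow_pos hQ0 _)
  have hrep : ∀ π : Equiv.Perm (Fin n),
      ∏ e ∈ E, pairProb q s (a e.1 e.2) (b (π e.1) (π e.2)) = D * r ^ kk π := by
    intro π
    have hstar : (∏ e ∈ E, pairProb q s (a e.1 e.2) (b (π e.1) (π e.2)))
        * (P ^ (2 * kk π) * Q ^ (Na + Nb))
        = T ^ kk π * P ^ (Na + Nb) * Q ^ (N + kk π) := by
      have e1 : P ^ (mm π + 2 * kk π) = P ^ (Na + Nb) := by rw [hm]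
      have e2 : Q ^ (zz π + (Na + Nb)) = Q ^ (N + kk π) := by rw [hz]
      rw [hprod π]
      calc T ^ kk π * P ^ mm π * Q ^ zz π * (P ^ (2 * kk π) * Q ^ (Na + Nb))
          = T ^ kk π * P ^ (mm π + 2 * kk π) * Q ^ (zz π + (Na + Nb)) := by
            rw [pow_add, pow_add]; ring
        _ = T ^ kk π * P ^ (Na + Nb) * Q ^ (N + kk π) := by rw [e1, e2]
    have h2 : D * r ^ kk π * (P ^ (2 * kk π) * Q ^ (Na + Nb))
        = T ^ kk π * P ^ (Na + Nb) * Q ^ (N + kk π) := by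
      rw [hD, hr, div_pow, mul_pow, pow_add Q N (kk π), ← pow_mul]
      have hQne : Q ^ (Na + Nb) ≠ 0 := pow_ne_zero _ hQ0.ne'
      have hPne : P ^ (2 * kk π) ≠ 0 := pow_ne_zero _ hP0.ne'
      field_simp
    exact mul_right_cancel₀ (mul_ne_zero (pow_ne_zero _ hP0.ne') (pow_ne_zero _ hQ0.ne')) (hstar.trans h2.symm)
  -- qapScore = 2 * kk
  have hqap : ∀ π : Equiv.Perm (Fin n), qapScore n π a b = 2 * (kk π : ℝ) := by
    intro π
    have h1 := sum_pairs' n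
      (fun u v => (if a u v = true then (1 : ℝ) else 0)
        * (if b (π u) (π v) = true then (1 : ℝ) else 0))
      (fun u v => show ((if a u v = true then (1 : ℝ) else 0) * _)
          = ((if a v u = true then (1 : ℝ) else 0) * _) by
        rw [ha_symm, hb_symm])
    beta_reduce at h1
    have hdiag : ∑ u : Fin n, (if a u u = true then (1 : ℝ) else 0)
        * (if b (π u) (π u) = true then (1 : ℝ) else 0) = 0 := by
      apply Finset.sum_eq_zero; intro u _; rw [ha_diag]; simp
    have h2 : ∀ e ∈ E, (if a e.1 e.2 = true then (1 : ℝ) else 0)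
        * (if b (π e.1) (π e.2) = true then (1 : ℝ) else 0)
        = ((if a e.1 e.2 && b (π e.1) (π e.2) then 1 else 0 : ℕ) : ℝ) := by
      intro e _
      cases a e.1 e.2 <;> cases b (π e.1) (π e.2) <;> simp
    rw [qapScore, h1, hdiag, add_zero, Finset.sum_congr rfl h2, ← Nat.cast_sum,
      two_smul, hkk]
    push_cast
    ring
  -- joint comparison
  have hjoint : ∀ π1 π2 : Equiv.Perm (Fin n),
      corrERJoint n q s π1 a b ≤ corrERJoint n q s π2 a b ↔ kk π1 ≤ kk π2 := by
    intro π1 π2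
    rw [corrERJoint, corrERJoint, ← hE, hrep π1, hrep π2]
    have hfac : (0 : ℝ) < (Nat.factorial n : ℝ)⁻¹ := by positivity
    rw [mul_le_mul_iff_of_pos_left hfac, mul_le_mul_iff_of_pos_left hD0]
    exact pow_le_pow_iff_right₀ hr1
  -- posterior comparison
  have hpost : ∀ π1 π2 : Equiv.Perm (Fin n),
      corrERPosterior n q s π1 a b ≤ corrERPosterior n q s π2 a b
        ↔ corrERJoint n q s π1 a b ≤ corrERJoint n q s π2 a b := by
    intro π1 π2
    rw [corrERPosterior, corrERPosterior]
    exact div_le_div_iff_of_pos_right hpos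
  -- qap comparison
  have hqap2 : ∀ π1 π2 : Equiv.Perm (Fin n),
      qapScore n π1 a b ≤ qapScore n π2 a b ↔ kk π1 ≤ kk π2 := by
    intro π1 π2
    rw [hqap π1, hqap π2]
    constructor
    · intro h
      exact_mod_cast le_of_mul_le_mul_left h (by norm_num : (0:ℝ) < 2)
    · intro h
      have : (kk π1 : ℝ) ≤ kk π2 := by exact_mod_cast h
      linarith
  intro π
  constructor
  · intro h π'
    exact (hqap2 π' π).2 ((hjoint π' π).1 ((hpost π' π).1 (h π')))
  · intro h π'
    exact (hpost π' π).2 ((hjoint π' π).2 ((hqap2 π' π).1 (h π')))
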